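/- Let P be a finite set of positive integers, m = min P, k ≥ 0, and Q = {p - m : p ∈ P, p ≠ m} ∪ {m}. For all i, j ∈ {0, 1, …, k-1}, the equivalence class of i under ≈_{Q,k} equals the equivalence class of j under ≈_{Q,k} if and only if the equivalence class of i under ≈_{P,k+m} equals the equivalence class of j under ≈_{P,k+m}. -/
import Mathlib


/-- minimum of a finite set of naturals (as `sInf`). -/
noncomputable def mP (P : Finset ℕ) : ℕ := sInf (↑P : Set ℕ)

/-- the generating relation `∼_{P,k}` on `{0,…,k-1}`. -/
def simRel (P : Finset ℕ) (k i j : ℕ) : Prop :=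
  i < k ∧ j < k ∧ (i % mP P = j % mP P ∨
    ∃ i' j', i' < k ∧ j' < k ∧ i' % mP P = i % mP P ∧ j' % mP P = j % mP P ∧
      (max i' j' - min i' j') ∈ P)

/-- the class of `i` under the equivalence closure `≈_{P,k}`. -/
def cls (P : Finset ℕ) (k i : ℕ) : Set ℕ := {j | Relation.EqvGen (simRel P k) i j}

/-- the FW-word: `FW P k i = min [i]_{P,k}`. -/
noncomputable def FW (P : Finset ℕ) (k : ℕ) : ℕ → ℕ := fun i => sInf (cls P k i)

/-- Euclidean reduction `Q = {p - m : p ∈ P, p ≠ m} ∪ {m}`. -/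
noncomputable def Qred (P : Finset ℕ) : Finset ℕ :=
  ((P.erase (mP P)).image (fun p => p - mP P)) ∪ {mP P}

/-- `p` is a period of the word `w` of length `n`. -/
def HasPeriodF {A : Type*} (w : ℕ → A) (n p : ℕ) : Prop :=
  ∀ i, i + p < n → w i = w (i + p)

/- ======================= auxiliary lemmas ======================= -/

lemma cls_eq_iff (P : Finset ℕ) (k i j : ℕ) :
    cls P k i = cls P k j ↔ Relation.EqvGen (simRel P k) i j := by
  constructor
  · intro h
    have hj : j ∈ cls P k j := Relation.EqvGen.refl j
    rw [← h] at hj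
    exact hj
  · intro h
    ext z
    simp only [cls, Set.mem_setOf_eq]
    exact ⟨fun hz => Relation.EqvGen.trans _ _ _ (Relation.EqvGen.symm _ _ h) hz,
           fun hz => Relation.EqvGen.trans _ _ _ h hz⟩

lemma eqvGen_mono' {r s : ℕ → ℕ → Prop} (h : ∀ a b, r a b → Relation.EqvGen s a b) :
    ∀ {a b : ℕ}, Relation.EqvGen r a b → Relation.EqvGen s a b := by
  intro a b hab
  induction hab with
  | rel a b h' => exact h a b h'
  | refl a => exact Relation.EqvGen.refl a
  | symm a b _ ih => exact Relation.EqvGen.symm _ _ ih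
  | trans a b c _ _ ih1 ih2 => exact Relation.EqvGen.trans _ _ _ ih1 ih2

lemma mP_mem {P : Finset ℕ} (hP : P.Nonempty) : mP P ∈ P :=
  Finset.mem_coe.1 (Nat.sInf_mem (Finset.coe_nonempty.mpr hP))

lemma mP_le {P : Finset ℕ} {p : ℕ} (hp : p ∈ P) : mP P ≤ p :=
  Nat.sInf_le (Finset.mem_coe.2 hp)

lemma mem_Q_m (P : Finset ℕ) : mP P ∈ Qred P := by
  apply Finset.mem_union_right
  exact Finset.mem_singleton_self _

lemma sub_mem_Q {P : Finset ℕ} {p : ℕ} (hp : p ∈ P) (hne : p ≠ mP P) :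
    p - mP P ∈ Qred P := by
  apply Finset.mem_union_left
  exact Finset.mem_image.2 ⟨p, Finset.mem_erase.2 ⟨hne, hp⟩, rfl⟩

lemma Q_cases {P : Finset ℕ} {q : ℕ} (hq : q ∈ Qred P) :
    q = mP P ∨ ∃ p ∈ P, mP P < p ∧ q = p - mP P := by
  rcases Finset.mem_union.1 hq with h | h
  · obtain ⟨p, hp, hpq⟩ := Finset.mem_image.1 h
    obtain ⟨hne, hpP⟩ := Finset.mem_erase.1 hp
    exact Or.inr ⟨p, hpP, lt_of_le_of_ne (mP_le hpP) (Ne.symm hne), hpq.symm⟩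
  · exact Or.inl (Finset.mem_singleton.1 h)

lemma max_sub_min (a q : ℕ) : max a (a + q) - min a (a + q) = q := by
  rw [max_eq_right (Nat.le_add_right a q), min_eq_left (Nat.le_add_right a q)]
  omega

/-- a direct step of size `q ∈ Q` inside `[0,k)`. -/
lemma Q_step {P : Finset ℕ} {k a q : ℕ} (hq : q ∈ Qred P) (h : a + q < k) :
    simRel (Qred P) k a (a + q) := by
  refine ⟨by omega, h, Or.inr ⟨a, a + q, by omega, h, rfl, rfl, ?_⟩⟩
  rw [max_sub_min]
  exact hq

lemma chain_of_step {R : ℕ → ℕ → Prop} {d k : ℕ}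
    (hstep : ∀ a, a + d < k → Relation.EqvGen R a (a + d)) :
    ∀ (t a : ℕ), a + d * t < k → Relation.EqvGen R a (a + d * t) := by
  intro t
  induction t with
  | zero => intro a _; simpa using Relation.EqvGen.refl a
  | succ n ih =>
    intro a h
    have hms : d * (n + 1) = d * n + d := Nat.mul_succ d n
    have h1 : a + d * n < k := by omega
    have h2 := hstep (a + d * n) (by omega)
    have h3 := Relation.EqvGen.trans _ _ _ (ih a h1) h2
    have heq : a + d * n + d = a + d * (n + 1) := by omega
    rwa [heq] at h3

lemma mod_eq_decomp {m x y : ℕ} (h : x % m = y % m) (hle : x ≤ y) :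
    ∃ t, y = x + m * t := by
  obtain ⟨t, ht⟩ := (Nat.modEq_iff_dvd' hle).1 h
  exact ⟨t, by omega⟩

lemma chain_mod {R : ℕ → ℕ → Prop} {d k x y : ℕ}
    (hstep : ∀ a, a + d < k → Relation.EqvGen R a (a + d))
    (hx : x < k) (hy : y < k) (hxy : x % d = y % d) : Relation.EqvGen R x y := by
  rcases le_total x y with hle | hle
  · obtain ⟨t, ht⟩ := mod_eq_decomp hxy hle
    have h1 : x + d * t < k := by omega
    have h2 := chain_of_step hstep t x h1
    have heq : x + d * t = y := by omega
    rwa [heq] at h2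
  · obtain ⟨t, ht⟩ := mod_eq_decomp hxy.symm hle
    have h1 : y + d * t < k := by omega
    have h2 := chain_of_step hstep t y h1
    have heq : y + d * t = x := by omega
    rw [heq] at h2
    exact Relation.EqvGen.symm _ _ h2

/- ======================= direction 1 : Q ⇒ P ======================= -/

/-- a step of size `q ∈ Q` inside `[0,k)` is realized in `≈_{P,k+m}`. -/
lemma P_step (P : Finset ℕ) {k a q : ℕ} (hq : q ∈ Qred P) (h : a + q < k) :
    Relation.EqvGen (simRel P (k + mP P)) a (a + q) := by
  rcases Q_cases hq with hqm | ⟨p, hpP, hpm, hqp⟩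
  · subst hqm
    apply Relation.EqvGen.rel
    exact ⟨by omega, by omega, Or.inl (Nat.add_mod_right a (mP P)).symm⟩
  · have hpq : p = q + mP P := by omega
    have h1 : simRel P (k + mP P) a (a + p) := by
      refine ⟨by omega, by omega, Or.inr ⟨a, a + p, by omega, by omega, rfl, rfl, ?_⟩⟩
      rw [max_sub_min]
      exact hpP
    have h2 : simRel P (k + mP P) (a + p) (a + q) := by
      refine ⟨by omega, by omega, Or.inl ?_⟩
      have : a + p = (a + q) + mP P := by omega
      rw [this]
      exact Nat.add_mod_right (a + q) (mP P)
    exact Relation.EqvGen.trans _ _ _ (Relation.EqvGen.rel _ _ h1) (Relation.EqvGen.rel _ _ h2)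

lemma dir1 (P : Finset ℕ) (hP : P.Nonempty) {k x y : ℕ} (h : simRel (Qred P) k x y) :
    Relation.EqvGen (simRel P (k + mP P)) x y := by
  obtain ⟨hx, hy, hcase⟩ := h
  have hQne : (↑(Qred P) : Set ℕ).Nonempty := ⟨mP P, Finset.mem_coe.2 (mem_Q_m P)⟩
  have hmQ : mP (Qred P) ∈ Qred P := Finset.mem_coe.1 (Nat.sInf_mem hQne)
  have hstep : ∀ a, a + mP (Qred P) < k →
      Relation.EqvGen (simRel P (k + mP P)) a (a + mP (Qred P)) :=
    fun a ha => P_step P hmQ ha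
  rcases hcase with hmod | ⟨a, b, ha, hb, hax, hby, hab⟩
  · exact chain_mod hstep hx hy hmod
  · have e1 : Relation.EqvGen (simRel P (k + mP P)) x a :=
      chain_mod hstep hx ha hax.symm
    have e3 : Relation.EqvGen (simRel P (k + mP P)) b y :=
      chain_mod hstep hb hy hby
    have e2 : Relation.EqvGen (simRel P (k + mP P)) a b := by
      rcases le_total a b with hle | hle
      · have hq : b - a ∈ Qred P := by
          rwa [max_eq_right hle, min_eq_left hle] at hab
        have := P_step P hq (by omega : a + (b - a) < k)
        have heq : a + (b - a) = b := by omega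
        rwa [heq] at this
      · have hq : a - b ∈ Qred P := by
          rwa [max_eq_left hle, min_eq_right hle] at hab
        have := P_step P hq (by omega : b + (a - b) < k)
        have heq : b + (a - b) = a := by omega
        rw [heq] at this
        exact Relation.EqvGen.symm _ _ this
    exact Relation.EqvGen.trans _ _ _ e1 (Relation.EqvGen.trans _ _ _ e2 e3)

/- ======================= direction 2 : P ⇒ Q ======================= -/

/-- retraction of `[0, k+m)` onto `[0, k)`. -/
def rmap (k m x : ℕ) : ℕ := if x < k then x else x - m

lemma rmap_lt {k m x : ℕ} (hm : 0 < m) (hk : 0 < k) (hx : x < k + m) : rmap k m x < k := by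
  unfold rmap; split <;> omega

lemma rmap_of_lt {k m x : ℕ} (hx : x < k) : rmap k m x = x := if_pos hx

/-- an `m`-step inside `[0,k)` is realized in `≈_{Q,k}` (`m ∈ Q`). -/
lemma Qm_step (P : Finset ℕ) {k : ℕ} :
    ∀ a, a + mP P < k → Relation.EqvGen (simRel (Qred P) k) a (a + mP P) :=
  fun a ha => Relation.EqvGen.rel _ _ (Q_step (mem_Q_m P) ha)

/-- congruence mod `m` on `[0, k+m)` is realized on representatives. -/
lemma L2' (P : Finset ℕ) {k x y t : ℕ} (hm : 0 < mP P)
    (hx : x < k + mP P) (hy : y < k + mP P) (ht : y = x + mP P * t) :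
    Relation.EqvGen (simRel (Qred P) k) (rmap k (mP P) x) (rmap k (mP P) y) := by
  set m := mP P with hmdef
  rcases Nat.eq_zero_or_pos t with rfl | htpos
  · simp only [Nat.mul_zero, Nat.add_zero] at ht
    rw [ht]
    exact Relation.EqvGen.refl _
  · have hmt : m ≤ m * t := Nat.le_mul_of_pos_right m htpos
    have hxk : x < k := by omega
    rw [rmap_of_lt hxk]
    by_cases hyk : y < k
    · rw [rmap_of_lt hyk]
      have hb : x + m * t < k := by omega
      have := chain_of_step (Qm_step P (k := k)) t x hb
      rwa [← ht] at this
    · have hrm : rmap k m y = y - m := if_neg hyk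
      have hmt' : m * (t - 1) + m = m * t := by
        rw [← Nat.mul_succ]
        congr 1
        omega
      have hy' : y - m = x + m * (t - 1) := by omega
      have hb : x + m * (t - 1) < k := by omega
      have := chain_of_step (Qm_step P (k := k)) (t - 1) x hb
      rw [hrm, hy']
      exact this

lemma L2 (P : Finset ℕ) {k x y : ℕ} (hm : 0 < mP P)
    (hx : x < k + mP P) (hy : y < k + mP P) (hxy : x % mP P = y % mP P) :
    Relation.EqvGen (simRel (Qred P) k) (rmap k (mP P) x) (rmap k (mP P) y) := by
  rcases le_total x y with hle | hle
  · obtain ⟨t, ht⟩ := mod_eq_decomp hxy hle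
    exact L2' P hm hx hy ht
  · obtain ⟨t, ht⟩ := mod_eq_decomp hxy.symm hle
    exact Relation.EqvGen.symm _ _ (L2' P hm hy hx ht)

/-- core of direction 2: a `P`-jump `a → a+p` with `a+p < k+m` is realized
    on representatives. -/
lemma P_jump (P : Finset ℕ) {k a p : ℕ} (hm : 0 < mP P) (hpP : p ∈ P)
    (hb : a + p < k + mP P) :
    Relation.EqvGen (simRel (Qred P) k) (rmap k (mP P) a) (rmap k (mP P) (a + p)) := by
  set m := mP P with hmdef
  have hmp : m ≤ p := mP_le hpP
  rcases eq_or_lt_of_le hmp with hpm | hpm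
  · -- p = m : it is a mod-m congruence
    apply L2 P hm (by omega) hb
    rw [← hpm]
    exact (Nat.add_mod_right a m).symm
  · -- p > m : use the reduced period q = p - m ∈ Q
    have hq : p - m ∈ Qred P := sub_mem_Q hpP (by omega)
    have hqk : a + (p - m) < k := by omega
    have hak : a < k := by omega
    have e1 : Relation.EqvGen (simRel (Qred P) k) a (a + (p - m)) :=
      Relation.EqvGen.rel _ _ (Q_step hq hqk)
    have e2 : Relation.EqvGen (simRel (Qred P) k)
        (rmap k m (a + (p - m))) (rmap k m (a + p)) := by
      apply L2 P hm (by omega) hb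
      have : a + p = (a + (p - m)) + m := by omega
      rw [this]
      exact (Nat.add_mod_right _ m).symm
    rw [rmap_of_lt hak]
    rw [rmap_of_lt hqk] at e2
    exact Relation.EqvGen.trans _ _ _ e1 e2

lemma dir2_step (P : Finset ℕ) {k x y : ℕ} (hm : 0 < mP P)
    (h : simRel P (k + mP P) x y) :
    Relation.EqvGen (simRel (Qred P) k) (rmap k (mP P) x) (rmap k (mP P) y) := by
  obtain ⟨hx, hy, hcase⟩ := h
  rcases hcase with hmod | ⟨i', j', hi', hj', hix, hjy, hp⟩
  · exact L2 P hm hx hy hmod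
  · have e1 : Relation.EqvGen (simRel (Qred P) k) (rmap k (mP P) x) (rmap k (mP P) i') :=
      L2 P hm hx hi' hix.symm
    have e3 : Relation.EqvGen (simRel (Qred P) k) (rmap k (mP P) j') (rmap k (mP P) y) :=
      L2 P hm hj' hy hjy
    have e2 : Relation.EqvGen (simRel (Qred P) k) (rmap k (mP P) i') (rmap k (mP P) j') := by
      rcases le_total i' j' with hle | hle
      · have hpv : max i' j' - min i' j' = j' - i' := by
          rw [max_eq_right hle, min_eq_left hle]
        rw [hpv] at hp
        have := P_jump P hm hp (by omega : i' + (j' - i') < k + mP P)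
        have heq : i' + (j' - i') = j' := by omega
        rwa [heq] at this
      · have hpv : max i' j' - min i' j' = i' - j' := by
          rw [max_eq_left hle, min_eq_right hle]
        rw [hpv] at hp
        have := P_jump P hm hp (by omega : j' + (i' - j') < k + mP P)
        have heq : j' + (i' - j') = i' := by omega
        rw [heq] at this
        exact Relation.EqvGen.symm _ _ this
    exact Relation.EqvGen.trans _ _ _ e1 (Relation.EqvGen.trans _ _ _ e2 e3)

lemma dir2 (P : Finset ℕ) {k x y : ℕ} (hm : 0 < mP P)
    (h : Relation.EqvGen (simRel P (k + mP P)) x y) :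
    Relation.EqvGen (simRel (Qred P) k) (rmap k (mP P) x) (rmap k (mP P) y) := by
  induction h with
  | rel a b h' => exact dir2_step P hm h'
  | refl a => exact Relation.EqvGen.refl _
  | symm a b _ ih => exact Relation.EqvGen.symm _ _ ih
  | trans a b c _ _ ih1 ih2 => exact Relation.EqvGen.trans _ _ _ ih1 ih2

/- ======================= main theorem ======================= -/

theorem stmt1 (P : Finset ℕ) (hP : P.Nonempty) (hpos : ∀ p ∈ P, 0 < p)
    (k i j : ℕ) (hi : i < k) (hj : j < k) :
    cls (Qred P) k i = cls (Qred P) k j ↔ cls P (k + mP P) i = cls P (k + mP P) j := by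
  have hm : 0 < mP P := hpos _ (mP_mem hP)
  rw [cls_eq_iff, cls_eq_iff]
  constructor
  · intro h
    exact eqvGen_mono' (fun a b hab => dir1 P hP hab) h
  · intro h
    have h2 := dir2 P hm h
    rwa [rmap_of_lt hi, rmap_of_lt hj] at h2
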